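/- For every integer n > |b|, the term n^2 + b has a primitive divisor if and only if its greatest prime factor exceeds 2n. -/

import Mathlib

/-- `d` is a primitive divisor of the `n`-th term `n^2 + b`. -/
def IsPrimitiveDivisor (b n d : ℤ) : Prop :=
  1 < d ∧ d ∣ n ^ 2 + b ∧
    ∀ m : ℤ, 0 < m → m < n → m ^ 2 + b ≠ 0 → Int.gcd d (m ^ 2 + b) = 1

/-- The greatest prime factor of an integer, as the sup of the prime factors
of its absolute value. -/
def greatestPrimeFactor (m : ℤ) : ℕ := m.natAbs.primeFactors.sup id

lemma aux_dvd_diff_or_sum {p : ℕ} (hp : p.Prime) {b n m : ℤ}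
    (h1 : (p:ℤ) ∣ n^2 + b) (h2 : (p:ℤ) ∣ m^2 + b) :
    (p:ℤ) ∣ n - m ∨ (p:ℤ) ∣ n + m := by
  have hmul : (p:ℤ) ∣ (n - m) * (n + m) := by
    have h := dvd_sub h1 h2
    have heq : n^2 + b - (m^2 + b) = (n - m) * (n + m) := by ring
    rwa [heq] at h
  exact (Nat.prime_iff_prime_int.mp hp).dvd_or_dvd hmul

lemma aux_exists_smaller (b n : ℤ) (hb : ∀ k : ℤ, b ≠ -k^2) (hn : |b| < n)
    {p : ℕ} (hp : p.Prime) (hpd : (p:ℤ) ∣ n^2 + b) (hple : (p:ℤ) ≤ 2*n) :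
    ∃ m : ℤ, 0 < m ∧ m < n ∧ (p:ℤ) ∣ m^2 + b := by
  have hb0 : b ≠ 0 := fun h => hb 0 (by simp [h])
  have hn2 : 2 ≤ n := by
    have h1 : 1 ≤ |b| := Int.one_le_abs hb0
    linarith
  have hppos : (0:ℤ) < p := by exact_mod_cast hp.pos
  set r := n % (p:ℤ) with hrdef
  have hr0 : 0 ≤ r := Int.emod_nonneg n (by positivity)
  have hrp : r < p := Int.emod_lt_of_pos n hppos
  have hdiff : (p:ℤ) ∣ n - r := Int.dvd_self_sub_of_emod_eq rfl
  have hdr : (p:ℤ) ∣ r^2 + b := by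
    have : r^2 + b = (n^2 + b) - (n - r) * (n + r) := by ring
    rw [this]
    exact dvd_sub hpd (Dvd.dvd.mul_right hdiff _)
  rcases eq_or_lt_of_le hr0 with hr | hr
  · -- r = 0 : p ∣ n and p ∣ b
    have hpn : (p:ℤ) ∣ n := by
      have := Int.dvd_self_sub_of_emod_eq (hrdef ▸ hr.symm)
      simpa using this
    have hpb : (p:ℤ) ∣ b := by
      have : b = (n^2 + b) - n * n := by ring
      rw [this]
      exact dvd_sub hpd (Dvd.dvd.mul_right hpn _)
    have hplen : (p:ℤ) ≤ n := Int.le_of_dvd (by linarith) hpn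
    have hpltn : (p:ℤ) < n := by
      rcases lt_or_eq_of_le hplen with h | h
      · exact h
      · exfalso
        have : b = 0 := Int.eq_zero_of_abs_lt_dvd (h ▸ hpb) (h ▸ hn)
        exact hb0 this
    refine ⟨(p:ℤ), hppos, hpltn, ?_⟩
    have : (p:ℤ)^2 + b = b + (p:ℤ) * p := by ring
    rw [this]
    exact dvd_add hpb (Dvd.dvd.mul_right dvd_rfl _)
  · rcases lt_or_ge r n with hrn | hrn
    · exact ⟨r, hr, hrn, hdr⟩
    · -- n ≤ r < p ≤ 2n, take m = p - r
      have hm0 : 0 < (p:ℤ) - r := by linarith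
      have hmlen : (p:ℤ) - r ≤ n := by linarith
      have hmltn : (p:ℤ) - r < n := by
        rcases lt_or_eq_of_le hmlen with h | h
        · exact h
        · exfalso
          -- then p = n + r, forcing r = n and p = 2n
          have hrn' : r = n := by linarith
          have hp2n : (p:ℤ) = 2 * n := by linarith
          have h2p : (2:ℕ) ∣ p := by
            have : (2:ℤ) ∣ (p:ℤ) := ⟨n, hp2n⟩
            exact_mod_cast this
          rcases (Nat.Prime.eq_one_or_self_of_dvd hp 2 h2p) with h1 | h1
          · norm_num at h1
          · have : ((2:ℕ):ℤ) = 2 * n := by rw [h1]; exact hp2n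
            have : n = 1 := by push_cast at this; linarith
            linarith
      refine ⟨(p:ℤ) - r, hm0, hmltn, ?_⟩
      have : ((p:ℤ) - r)^2 + b = (r^2 + b) + (p:ℤ) * ((p:ℤ) - 2*r) := by ring
      rw [this]
      exact dvd_add hdr (Dvd.dvd.mul_right dvd_rfl _)

/-- For every integer `n > |b|`, the term `n^2 + b` has a primitive divisor
if and only if its greatest prime factor exceeds `2n`. -/
theorem stmt_2 (b : ℤ) (hb : ∀ k : ℤ, b ≠ -k^2)
    (n : ℤ) (hn : |b| < n) :
    (∃ d : ℤ, IsPrimitiveDivisor b n d) ↔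
      2 * n < (greatestPrimeFactor (n ^ 2 + b) : ℤ) := by
  have hb0 : b ≠ 0 := fun h => hb 0 (by simp [h])
  have hn2 : 2 ≤ n := by
    have h1 : 1 ≤ |b| := Int.one_le_abs hb0
    linarith
  have habs : -n < b := by
    have := neg_abs_le b; linarith
  have hP1 : 1 < n^2 + b := by nlinarith
  have hP0 : 0 < n^2 + b := by linarith
  have hnat1 : 1 < (n^2 + b).natAbs := by
    have h := Int.natAbs_of_nonneg (le_of_lt hP0)
    omega
  constructor
  · rintro ⟨d, hd1, hdd, hprim⟩
    -- take a prime factor p of d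
    set p := d.natAbs.minFac with hpdef
    have hd1' : 1 < d.natAbs := by
      have h := Int.natAbs_of_nonneg (by linarith : (0:ℤ) ≤ d)
      omega
    have hp : p.Prime := Nat.minFac_prime (by omega)
    have hpd : (p:ℤ) ∣ d := by
      have h1 : (p:ℤ) ∣ (d.natAbs : ℤ) := Int.natCast_dvd_natCast.mpr (Nat.minFac_dvd _)
      have h2 : (d.natAbs : ℤ) ∣ d := Int.natAbs_dvd.mpr dvd_rfl
      exact h1.trans h2
    have hpP : (p:ℤ) ∣ n^2 + b := hpd.trans hdd
    -- p > 2n, else use aux_exists_smaller to contradict primitivity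
    have h2np : 2 * n < (p:ℤ) := by
      by_contra hle
      push_neg at hle
      obtain ⟨m, hm0, hmn, hpm⟩ := aux_exists_smaller b n hb hn hp hpP hle
      have hmne : m^2 + b ≠ 0 := by
        intro h
        exact hb m (by linarith)
      have hg := hprim m hm0 hmn hmne
      have : (p:ℤ) ∣ (Int.gcd d (m^2 + b) : ℤ) := Int.dvd_coe_gcd hpd hpm
      rw [hg] at this
      have := Int.le_of_dvd (by norm_num) this
      have := hp.two_le
      omega
    -- p ∈ primeFactors, hence p ≤ sup
    have hmem : p ∈ (n^2 + b).natAbs.primeFactors := by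
      rw [Nat.mem_primeFactors]
      refine ⟨hp, ?_, by omega⟩
      have := Int.natAbs_dvd_natAbs.mpr hpP
      simpa using this
    have hle : p ≤ greatestPrimeFactor (n^2 + b) := Finset.le_sup (f := id) hmem
    have : (p:ℤ) ≤ (greatestPrimeFactor (n^2 + b) : ℤ) := by exact_mod_cast hle
    linarith
  · intro h2n
    -- p := greatest prime factor works as primitive divisor
    set q := greatestPrimeFactor (n^2 + b) with hqdef
    have hne : ((n^2 + b).natAbs.primeFactors).Nonempty :=
      (Nat.nonempty_primeFactors).mpr hnat1
    obtain ⟨p, hpmem, hpsup⟩ := Finset.exists_mem_eq_sup _ hne id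
    have hpq : q = p := hpsup
    rw [Nat.mem_primeFactors] at hpmem
    obtain ⟨hp, hpdvd, _⟩ := hpmem
    have hqP : (q:ℤ) ∣ n^2 + b := by
      have h : ((q:ℤ)).natAbs ∣ (n^2 + b).natAbs := by simpa [hpq] using hpdvd
      exact Int.natAbs_dvd_natAbs.mp h
    have hqprime : q.Prime := hpq ▸ hp
    refine ⟨(q:ℤ), ?_, hqP, ?_⟩
    · exact_mod_cast hqprime.one_lt
    · intro m hm0 hmn _
      by_contra hg
      -- then q ∣ m^2 + b
      have hgd : Int.gcd (q:ℤ) (m^2+b) ∣ q := by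
        have := Int.gcd_dvd_left (a := (q:ℤ)) (b := m^2+b)
        exact_mod_cast this
      rcases (hqprime.eq_one_or_self_of_dvd _ hgd) with h | h
      · exact hg h
      · have hqm : (q:ℤ) ∣ m^2 + b := by
          have := Int.gcd_dvd_right (a := (q:ℤ)) (b := m^2+b)
          rw [h] at this
          exact_mod_cast this
        rcases aux_dvd_diff_or_sum hqprime hqP hqm with hd | hd
        · have hpos : 0 < n - m := by linarith
          have := Int.le_of_dvd hpos hd
          linarith
        · have hpos : 0 < n + m := by linarith
          have := Int.le_of_dvd hpos hd
          linarith
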